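/- For each m ≥ 0, the subcollection L_m of the lattice path operad L consisting of all lattice paths of complexity at most m is closed under the operadic substitution maps of L; that is, if x ∈ L_m(n₁,...,n_k;n) and y ∈ L_m(m₁,...,m_l;nᵢ) then x ∘ᵢ y ∈ L_m. -/

import Mathlib

/-- Number of alternations (changes of letter) along a word. -/
def altCount : List ℕ → ℕ
  | [] => 0
  | [_] => 0
  | a :: b :: rest => (if a = b then 0 else 1) + altCount (b :: rest)

/-- The individual complexity index `c_{ab}` of a word: the number of alternations between
`a` and `b` in the subword consisting of all occurrences of `a` and `b`. -/
def complexityIdx (w : List ℕ) (a b : ℕ) : ℕ :=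
  altCount (w.filter (fun c => c = a ∨ c = b))

/-- Operadic substitution `x ∘ᵢ y` of subdivided integer-strings (a string is a list of
pairs (letter, block index)): the `t`-th occurrence of the letter `i` in `x` is replaced
by the `t`-th block of `y`, letters being renumbered so that the letters `a` of `y`
become `a + i` and the letters `j > i` of `x` become `j + l - 1`, where `l` is the number
of colours of `y`; inserted letters inherit the block index of the replaced occurrence. -/
def substStr (i l : ℕ) : List (ℕ × ℕ) → List (ℕ × ℕ) → ℕ → List (ℕ × ℕ)
  | [], _, _ => []
  | (j, b) :: rest, y, t =>
    if j < i then (j, b) :: substStr i l rest y t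
    else if j = i then
      ((y.filter (fun p => p.2 = t)).map (fun p => (p.1 + i, b))) ++ substStr i l rest y (t + 1)
    else (j + l - 1, b) :: substStr i l rest y t


lemma altCount_cons (a b : ℕ) (w : List ℕ) :
    altCount (a :: b :: w) = (if a = b then 0 else 1) + altCount (b :: w) := rfl

lemma altCount_le_cons (a : ℕ) (w : List ℕ) : altCount w ≤ altCount (a :: w) := by
  cases w with
  | nil => simp [altCount]
  | cons b r => rw [altCount_cons]; omega

lemma altCount_cons_le_cons_cons (a b : ℕ) (w : List ℕ) :
    altCount (a :: w) ≤ altCount (a :: b :: w) := by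
  cases w with
  | nil => rw [altCount_cons]; simp [altCount]
  | cons c r =>
    rw [altCount_cons, altCount_cons, altCount_cons]
    by_cases h1 : a = b <;> by_cases h2 : b = c <;> by_cases h3 : a = c <;>
      simp [h1, h2, h3] <;> omega

lemma altCount_cons_le_of_sublist {w w' : List ℕ} (h : List.Sublist w w') (a : ℕ) :
    altCount (a :: w) ≤ altCount (a :: w') := by
  induction h generalizing a with
  | slnil => exact le_refl _
  | cons b h ih => exact (ih a).trans (altCount_cons_le_cons_cons a b _)
  | cons_cons b h ih =>
    rw [altCount_cons, altCount_cons]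
    exact Nat.add_le_add_left (ih b) _

lemma altCount_le_of_sublist {w w' : List ℕ} (h : List.Sublist w w') :
    altCount w ≤ altCount w' := by
  induction h with
  | slnil => exact le_refl _
  | cons b h ih => exact ih.trans (altCount_le_cons b _)
  | cons_cons b h ih => exact altCount_cons_le_of_sublist h b

lemma altCount_map_le (f : ℕ → ℕ) (w : List ℕ) : altCount (w.map f) ≤ altCount w := by
  induction w with
  | nil => exact le_refl _
  | cons a r ih =>
    cases r with
    | nil => simp [altCount]
    | cons b r' =>
      simp only [List.map_cons] at ih ⊢
      rw [altCount_cons, altCount_cons]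
      refine Nat.add_le_add ?_ ih
      by_cases h : a = b <;> simp [h] <;> split <;> omega

lemma altCount_cons_append_const {run : List ℕ} {c : ℕ} (h : ∀ d ∈ run, d = c)
    (w : List ℕ) : altCount (c :: (run ++ w)) = altCount (c :: w) := by
  induction run with
  | nil => rfl
  | cons d r ih =>
    have hd : d = c := h d (by simp)
    subst hd
    have := ih (fun e he => h e (by simp [he]))
    rw [List.cons_append, altCount_cons, if_pos rfl, Nat.zero_add, this]

lemma altCount_cons_join_le {L : List (List ℕ)} {r : List ℕ}
    (h : List.Forall₂ (fun run d => ∀ e ∈ run, e = d) L r) (c : ℕ) :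
    altCount (c :: L.flatten) ≤ altCount (c :: r) := by
  induction h generalizing c with
  | nil => exact le_refl _
  | @cons run d L r hrd h ih =>
    cases run with
    | nil =>
      simp only [List.flatten_cons, List.nil_append]
      exact (ih c).trans (altCount_cons_le_cons_cons c d r)
    | cons e run' =>
      have he : e = d := hrd e (by simp)
      subst he
      simp only [List.flatten_cons, List.cons_append]
      rw [altCount_cons, altCount_cons]
      refine Nat.add_le_add ?_ ?_
      · exact le_refl _
      · rw [altCount_cons_append_const (fun z hz => hrd z (by simp [hz]))]
        exact ih e

lemma altCount_join_le {L : List (List ℕ)} {r : List ℕ}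
    (h : List.Forall₂ (fun run d => ∀ e ∈ run, e = d) L r) :
    altCount L.flatten ≤ altCount r := by
  cases h with
  | nil => exact le_refl _
  | @cons run d L r hrd h =>
    cases run with
    | nil =>
      simp only [List.flatten_cons, List.nil_append]
      exact (altCount_join_le h).trans (altCount_le_cons d r)
    | cons e run' =>
      have he : e = d := hrd e (by simp)
      subst he
      simp only [List.flatten_cons, List.cons_append]
      rw [altCount_cons_append_const (fun z hz => hrd z (by simp [hz]))]
      exact altCount_cons_join_le h e

lemma filter_split_sorted (q : ℕ × ℕ → Bool) :
    ∀ (y : List (ℕ × ℕ)), (y.map Prod.snd).Pairwise (· ≤ ·) → ∀ t : ℕ,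
    y.filter (fun p => decide (t ≤ p.2) && q p) =
      y.filter (fun p => decide (p.2 = t) && q p) ++
        y.filter (fun p => decide (t + 1 ≤ p.2) && q p) := by
  intro y
  induction y with
  | nil => intro _ t; simp
  | cons p0 rest ih =>
    intro hs t
    rw [List.map_cons, List.pairwise_cons] at hs
    obtain ⟨hhead, htail⟩ := hs
    rcases Nat.lt_trichotomy p0.2 t with hlt | heq | hgt
    · rw [List.filter_cons, List.filter_cons, List.filter_cons]
      have h1 : (decide (t ≤ p0.2) && q p0) = false := by
        simp [Nat.not_le.mpr hlt]
      have h2 : (decide (p0.2 = t) && q p0) = false := by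
        simp [Nat.ne_of_lt hlt]
      have h3 : (decide (t + 1 ≤ p0.2) && q p0) = false := by
        simp; omega
      rw [h1, h2, h3]
      exact ih htail t
    · rw [List.filter_cons, List.filter_cons, List.filter_cons]
      have h3 : (decide (t + 1 ≤ p0.2) && q p0) = false := by simp; omega
      rw [h3]
      have h12 : (decide (t ≤ p0.2) && q p0) = (decide (p0.2 = t) && q p0) := by
        simp [heq]
      rw [h12]
      cases hq : (decide (p0.2 = t) && q p0) with
      | false => simpa using ih htail t
      | true => simp only [hq, if_true, if_pos trivial, Bool.false_eq_true, if_false, List.cons_append]; rw [ih htail t]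
    · have hall : ∀ p ∈ p0 :: rest, t + 1 ≤ p.2 := by
        intro p hp
        rcases List.mem_cons.mp hp with rfl | hp
        · omega
        · have := hhead p.2 (List.mem_map.mpr ⟨p, hp, rfl⟩); omega
      have h2 : (p0 :: rest).filter (fun p => decide (p.2 = t) && q p) = [] := by
        apply List.filter_eq_nil_iff.mpr
        intro p hp
        have := hall p hp
        simp; omega
      rw [h2, List.nil_append]
      apply List.filter_congr
      intro p hp
      have := hall p hp
      have h1 : decide (t ≤ p.2) = true := by simp; omega
      have h2 : decide (t + 1 ≤ p.2) = true := by simp; omega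
      rw [h1, h2]


def fmap (i l j : ℕ) : ℕ := if j < i then j else j + l - 1

lemma fmap_lt {i l j : ℕ} (h : j < i) : fmap i l j = j := if_pos h

lemma fmap_gt {i l j : ℕ} (h : i < j) : fmap i l j = j + l - 1 := by
  unfold fmap; rw [if_neg]; omega

lemma fmap_inj {i l j j' : ℕ} (hj : j ≠ i) (hj' : j' ≠ i) :
    fmap i l j = fmap i l j' → j = j' := by
  unfold fmap; split_ifs <;> omega

lemma fmap_not_mid {i l c j : ℕ} (hj : j ≠ i) (hc1 : i ≤ c) (hc2 : c < i + l) :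
    fmap i l j ≠ c := by
  unfold fmap; split_ifs <;> omega

lemma structC1 {i l : ℕ} {y : List (ℕ × ℕ)} (hletters : ∀ p ∈ y, p.1 < l)
    {a' b' : ℕ} (ha' : a' ≠ i) (hb' : b' ≠ i) :
    ∀ (x : List (ℕ × ℕ)) (t : ℕ),
    ((substStr i l x y t).map Prod.fst).filter
        (fun c => decide (c = fmap i l a' ∨ c = fmap i l b')) =
      ((x.map Prod.fst).filter (fun c => decide (c = a' ∨ c = b'))).map (fmap i l) := by
  intro x
  induction x with
  | nil => intro t; simp [substStr]
  | cons p rest ih =>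
    intro t
    obtain ⟨j, blk⟩ := p
    have cond_iff : ∀ j : ℕ, j ≠ i →
        ((fmap i l j = fmap i l a' ∨ fmap i l j = fmap i l b') ↔ (j = a' ∨ j = b')) := by
      intro j hj
      constructor
      · rintro (h | h)
        · exact Or.inl (fmap_inj hj ha' h)
        · exact Or.inr (fmap_inj hj hb' h)
      · rintro (rfl | rfl)
        · exact Or.inl rfl
        · exact Or.inr rfl
    rcases Nat.lt_trichotomy j i with hlt | heq | hgt
    · have hji : j ≠ i := by omega
      simp only [substStr, if_pos hlt, List.map_cons, List.filter_cons]
      have h1 : decide (j = fmap i l a' ∨ j = fmap i l b')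
          = decide (j = a' ∨ j = b') := by
        apply decide_eq_decide.mpr
        have h := cond_iff j hji
        rw [fmap_lt hlt] at h
        exact h
      rw [h1, ih t]
      cases hd : decide (j = a' ∨ j = b') with
      | false => simp
      | true => simp [fmap_lt hlt]
    · subst heq
      simp only [substStr, lt_self_iff_false, ite_false, ite_true, eq_self_iff_true]
      simp only [List.map_append, List.filter_append, List.map_map]
      have hblock : ((y.filter (fun p => p.2 = t)).map
          (fun p => (Prod.fst ∘ fun p => (p.1 + j, blk)) p)).filter
          (fun c => decide (c = fmap j l a' ∨ c = fmap j l b')) = [] := by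
        apply List.filter_eq_nil_iff.mpr
        intro c hc
        obtain ⟨p, hp, rfl⟩ := List.mem_map.mp hc
        have hpy : p ∈ y := List.mem_of_mem_filter hp
        have hl : p.1 < l := hletters p hpy
        simp only [Function.comp, decide_eq_true_eq]
        push_neg
        constructor
        · exact fun h => fmap_not_mid ha' (by omega) (by omega) h.symm
        · exact fun h => fmap_not_mid hb' (by omega) (by omega) h.symm
      rw [hblock, List.nil_append, ih (t + 1), List.map_cons, List.filter_cons]
      have h2 : decide (j = a' ∨ j = b') = false := by
        simp only [decide_eq_false_iff_not]
        rintro (rfl | rfl)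
        · exact ha' rfl
        · exact hb' rfl
      rw [h2]
      simp
    · have hji : j ≠ i := by omega
      simp only [substStr, if_neg (by omega : ¬ j < i), if_neg hji, List.map_cons,
        List.filter_cons]
      have h1 : decide (j + l - 1 = fmap i l a' ∨ j + l - 1 = fmap i l b')
          = decide (j = a' ∨ j = b') := by
        apply decide_eq_decide.mpr
        have h := cond_iff j hji
        rw [fmap_gt hgt] at h
        exact h
      rw [h1, ih t]
      cases hd : decide (j = a' ∨ j = b') with
      | false => simp
      | true => simp [fmap_gt hgt]

lemma structC2 {i l α β : ℕ} {y : List (ℕ × ℕ)}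
    (hsorted : (y.map Prod.snd).Pairwise (· ≤ ·))
    (hα : α < l) (hβ : β < l) :
    ∀ (x : List (ℕ × ℕ)) (t : ℕ),
    (∀ p ∈ y, p.2 < t + (x.map Prod.fst).count i) →
    ((substStr i l x y t).map Prod.fst).filter
        (fun c => decide (c = α + i ∨ c = β + i)) =
      (y.filter (fun p => decide (t ≤ p.2) &&
        decide (p.1 = α ∨ p.1 = β))).map (fun p => p.1 + i) := by
  intro x
  induction x with
  | nil =>
    intro t hinv
    simp only [substStr, List.map_nil, List.filter_nil]
    symm
    rw [List.map_eq_nil_iff]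
    apply List.filter_eq_nil_iff.mpr
    intro p hp
    have := hinv p hp
    simp only [List.map_nil] at this
    simp only [Bool.and_eq_true, decide_eq_true_eq, not_and]
    intro ht
    simp only [List.count_nil] at this
    omega
  | cons p0 rest ih =>
    intro t hinv
    obtain ⟨j, blk⟩ := p0
    rcases Nat.lt_trichotomy j i with hlt | heq | hgt
    · simp only [substStr, if_pos hlt, List.map_cons, List.filter_cons]
      have h1 : decide (j = α + i ∨ j = β + i) = false := by
        simp only [decide_eq_false_iff_not]; omega
      rw [h1]
      simp only [Bool.false_eq_true, if_false]
      apply ih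
      intro p hp
      have := hinv p hp
      simp only [List.map_cons, List.count_cons] at this
      have hji : ¬ (j == i) = true := by simp; omega
      rw [if_neg hji] at this
      omega
    · subst heq
      simp only [substStr, lt_self_iff_false, ite_false, ite_true, eq_self_iff_true]
      simp only [List.map_append, List.filter_append, List.map_map]
      have hcount : ∀ p ∈ y, p.2 < (t + 1) + (rest.map Prod.fst).count j := by
        intro p hp
        have := hinv p hp
        simp only [List.map_cons, List.count_cons] at this
        rw [if_pos (by simp)] at this
        omega
      rw [ih (t + 1) hcount]
      have hblock : ((y.filter (fun p => p.2 = t)).map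
            (fun p => (Prod.fst ∘ fun p => (p.1 + j, blk)) p)).filter
            (fun c => decide (c = α + j ∨ c = β + j)) =
          (y.filter (fun p => decide (p.2 = t) &&
            decide (p.1 = α ∨ p.1 = β))).map (fun p => p.1 + j) := by
        rw [List.filter_map, List.filter_filter]
        congr 1
        apply List.filter_congr
        intro p _
        simp only [Function.comp]
        have : decide (p.1 + j = α + j ∨ p.1 + j = β + j)
            = decide (p.1 = α ∨ p.1 = β) := by
          apply decide_eq_decide.mpr; omega
        rw [this, Bool.and_comm]
      rw [hblock, ← List.map_append]
      congr 1
      have := filter_split_sorted (fun p => decide (p.1 = α ∨ p.1 = β)) y hsorted t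
      rw [this]
    · simp only [substStr, if_neg (by omega : ¬ j < i), if_neg (by omega : ¬ j = i),
        List.map_cons, List.filter_cons]
      have h1 : decide (j + l - 1 = α + i ∨ j + l - 1 = β + i) = false := by
        simp only [decide_eq_false_iff_not]; omega
      rw [h1]
      simp only [Bool.false_eq_true, if_false]
      apply ih
      intro p hp
      have := hinv p hp
      simp only [List.map_cons, List.count_cons] at this
      have hji : ¬ (j == i) = true := by simp; omega
      rw [if_neg hji] at this
      omega

lemma structC3 {i l : ℕ} {y : List (ℕ × ℕ)} (hletters : ∀ p ∈ y, p.1 < l)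
    {a' β : ℕ} (ha' : a' ≠ i) (hβ : β < l) :
    ∀ (x : List (ℕ × ℕ)) (t : ℕ),
    ∃ L : List (List ℕ),
      ((substStr i l x y t).map Prod.fst).filter
          (fun c => decide (c = fmap i l a' ∨ c = β + i)) = L.flatten ∧
      List.Forall₂ (fun run d => ∀ e ∈ run, e = d) L
        (((x.map Prod.fst).filter (fun c => decide (c = a' ∨ c = i))).map
          (fun c => if c = i then β + i else fmap i l a')) := by
  intro x
  induction x with
  | nil => intro t; exact ⟨[], by simp [substStr], by simp⟩
  | cons p0 rest ih
  => intro t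
     obtain ⟨j, blk⟩ := p0
     rcases Nat.lt_trichotomy j i with hlt | heq | hgt
     · obtain ⟨L, hL1, hL2⟩ := ih t
       have hji : j ≠ i := by omega
       simp only [substStr, if_pos hlt, List.map_cons, List.filter_cons]
       by_cases hja : j = a'
       · subst hja
         have h1 : decide (j = fmap i l j ∨ j = β + i) = true := by
           simp [fmap_lt hlt]
         have h2 : decide (j = j ∨ j = i) = true := by simp
         rw [h1, h2]
         refine ⟨[j] :: L, ?_, ?_⟩
         · simp only [if_true, List.flatten_cons, List.singleton_append, hL1]
         · simp only [if_true, List.map_cons, if_neg hji]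
           exact List.Forall₂.cons (by simp [fmap_lt hlt]) hL2
       · have h1 : decide (j = fmap i l a' ∨ j = β + i) = false := by
           simp only [decide_eq_false_iff_not]
           push_neg
           refine ⟨?_, by omega⟩
           intro h
           rw [← fmap_lt (i := i) (l := l) hlt] at h
           exact hja (fmap_inj hji ha' h)
         have h2 : decide (j = a' ∨ j = i) = false := by
           simp only [decide_eq_false_iff_not]; tauto
         rw [h1, h2]
         simp only [Bool.false_eq_true, if_false]
         exact ⟨L, hL1, hL2⟩
     · subst heq
       obtain ⟨L, hL1, hL2⟩ := ih (t + 1)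
       simp only [substStr, lt_self_iff_false, ite_false, ite_true, eq_self_iff_true]
       simp only [List.map_append, List.filter_append, List.map_map, List.map_cons,
         List.filter_cons]
       simp only [or_true, decide_true, if_true]
       set run := ((y.filter (fun p => p.2 = t)).map
           (fun p => (Prod.fst ∘ fun p => (p.1 + j, blk)) p)).filter
           (fun c => decide (c = fmap j l a' ∨ c = β + j)) with hrun
       refine ⟨run :: L, ?_, ?_⟩
       · simp only [List.flatten_cons, hL1]
       · simp only [List.map_cons, ite_true, eq_self_iff_true]
         refine List.Forall₂.cons ?_ hL2
         intro e he
         rw [hrun] at he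
         have hcond := List.of_mem_filter he
         have hmem := List.mem_of_mem_filter he
         obtain ⟨p, hp, rfl⟩ := List.mem_map.mp hmem
         have hpy : p ∈ y := List.mem_of_mem_filter hp
         have hpl : p.1 < l := hletters p hpy
         simp only [Function.comp, decide_eq_true_eq] at hcond ⊢
         rcases hcond with h | h
         · exact absurd h.symm (fmap_not_mid ha' (by omega) (by omega))
         · exact h
     · obtain ⟨L, hL1, hL2⟩ := ih t
       have hji : j ≠ i := by omega
       simp only [substStr, if_neg (by omega : ¬ j < i), if_neg hji, List.map_cons,
         List.filter_cons]
       by_cases hja : j = a'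
       · subst hja
         have h1 : decide (j + l - 1 = fmap i l j ∨ j + l - 1 = β + i) = true := by
           simp [fmap_gt hgt]
         have h2 : decide (j = j ∨ j = i) = true := by simp
         rw [h1, h2]
         refine ⟨[j + l - 1] :: L, ?_, ?_⟩
         · simp only [if_true, List.flatten_cons, List.singleton_append, hL1]
         · simp only [if_true, List.map_cons, if_neg hji]
           exact List.Forall₂.cons (by simp [fmap_gt hgt]) hL2
       · have h1 : decide (j + l - 1 = fmap i l a' ∨ j + l - 1 = β + i) = false := by
           simp only [decide_eq_false_iff_not]
           push_neg
           constructor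
           · intro h
             rw [← fmap_gt (i := i) (l := l) hgt] at h
             exact hja (fmap_inj hji ha' h)
           · have := fmap_not_mid (i := i) (l := l) (c := β + i) (j := j) hji
               (by omega) (by omega)
             rw [fmap_gt hgt] at this
             exact this
         have h2 : decide (j = a' ∨ j = i) = false := by
           simp only [decide_eq_false_iff_not]; tauto
         rw [h1, h2]
         simp only [Bool.false_eq_true, if_false]
         exact ⟨L, hL1, hL2⟩


lemma complexityIdx_comm (w : List ℕ) (a b : ℕ) :
    complexityIdx w a b = complexityIdx w b a := by
  unfold complexityIdx
  congr 1
  apply List.filter_congr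
  intro c _
  exact decide_eq_decide.mpr or_comm

lemma fmap_preim {i l a : ℕ} (h : a < i ∨ i + l ≤ a) :
    ∃ a', a' ≠ i ∧ fmap i l a' = a := by
  rcases h with h | h
  · exact ⟨a, by omega, fmap_lt h⟩
  · refine ⟨a + 1 - l, by omega, ?_⟩
    rw [fmap_gt (by omega)]
    omega


/-- The `m`-th filtration stage `L_m` of the lattice path operad (lattice paths of
complexity at most `m`) is closed under the operadic substitution maps. -/
theorem complexity_filtration_closed_under_substitution
    (m i l : ℕ) (x y : List (ℕ × ℕ))
    (hblocks : (y.map Prod.snd).Pairwise (· ≤ ·))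
    (hblock_lt : ∀ p ∈ y, p.2 < (x.map Prod.fst).count i)
    (hletters : ∀ p ∈ y, p.1 < l)
    (hx : ∀ a b : ℕ, a ≠ b → complexityIdx (x.map Prod.fst) a b ≤ m)
    (hy : ∀ a b : ℕ, a ≠ b → complexityIdx (y.map Prod.fst) a b ≤ m) :
    ∀ a b : ℕ, a ≠ b → complexityIdx ((substStr i l x y 0).map Prod.fst) a b ≤ m := by
  
  have hinv0 : ∀ p ∈ y, p.2 < 0 + (x.map Prod.fst).count i := by
    intro p hp; have := hblock_lt p hp; omega
  -- the y-side / y-side case, as a reusable fact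
  have caseYY : ∀ a b : ℕ, a ≠ b → (i ≤ a ∧ a < i + l) → (i ≤ b ∧ b < i + l) →
      complexityIdx ((substStr i l x y 0).map Prod.fst) a b ≤ m := by
    intro a b hab hA hB
    have e1 : a - i + i = a := by omega
    have e2 : b - i + i = b := by omega
    have h := structC2 (i := i) hblocks (show a - i < l by omega)
      (show b - i < l by omega) x 0 hinv0
    rw [e1, e2] at h
    unfold complexityIdx
    rw [h]
    have step1 : (y.filter (fun p => decide (0 ≤ p.2) &&
        decide (p.1 = a - i ∨ p.1 = b - i))).map (fun p => p.1 + i)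
        = ((y.filter (fun p => decide (p.1 = a - i ∨ p.1 = b - i))).map
            Prod.fst).map (fun c => c + i) := by
      rw [List.map_map]
      congr 1
    rw [step1]
    refine (altCount_map_le _ _).trans ?_
    have step2 : (y.filter (fun p => decide (p.1 = a - i ∨ p.1 = b - i))).map Prod.fst
        = (y.map Prod.fst).filter (fun c => decide (c = a - i ∨ c = b - i)) := by
      rw [List.filter_map]
      congr 1
    rw [step2]
    exact hy (a - i) (b - i) (by omega)
  -- the mixed case: a on the x side, b on the y side
  have caseXY : ∀ a b : ℕ, (a < i ∨ i + l ≤ a) → (i ≤ b ∧ b < i + l) →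
      complexityIdx ((substStr i l x y 0).map Prod.fst) a b ≤ m := by
    intro a b hA hB
    obtain ⟨a', ha'i, hfa⟩ := fmap_preim (i := i) (l := l) hA
    have e2 : b - i + i = b := by omega
    obtain ⟨L, hL1, hL2⟩ := structC3 hletters ha'i (show b - i < l by omega) x 0
    rw [hfa, e2] at hL1
    unfold complexityIdx
    rw [hL1]
    refine (altCount_join_le hL2).trans ?_
    refine (altCount_map_le _ _).trans ?_
    exact hx a' i ha'i
  intro a b hab
  by_cases hA : i ≤ a ∧ a < i + l
  · by_cases hB : i ≤ b ∧ b < i + l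
    · exact caseYY a b hab hA hB
    · rw [complexityIdx_comm]
      exact caseXY b a (by omega) hA
  · by_cases hB : i ≤ b ∧ b < i + l
    · exact caseXY a b (by omega) hB
    · -- both on the x side
      obtain ⟨a', ha'i, hfa⟩ := fmap_preim (i := i) (l := l) (a := a) (by omega)
      obtain ⟨b', hb'i, hfb⟩ := fmap_preim (i := i) (l := l) (a := b) (by omega)
      have h := structC1 hletters ha'i hb'i x 0
      rw [hfa, hfb] at h
      unfold complexityIdx
      rw [h]
      refine (altCount_map_le _ _).trans ?_
      refine hx a' b' ?_
      intro e
      exact hab (by rw [← hfa, ← hfb, e])
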